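/- arXiv:2208.14412 — 3 statements merged into one kernel-verified Lean document; each statement's English description precedes it below -/
import Mathlib

section
/- Let 𝒞 and ℱ be classes of graphs, and let T be an immersive transduction encoding a class 𝒟 in ℱ (i.e. 𝒟 ⊆ T(ℱ)) with 𝒟 ⊇ 𝒞 ∨ K₁, where 𝒞 ∨ K₁ is the class of graphs obtained from members of 𝒞 by adding an apex vertex adjacent to all vertices. Then there exists an integer r such that 𝒞 ⊑°_FO 𝓛_r(ℱ). -/
open SimpleGraph

/-! ### Finite graphs and colored graphs -/

/-- A finite simple graph. -/
structure FGraph : Type 1 where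
  V : Type
  [fin : Finite V]
  G : SimpleGraph V

attribute [instance] FGraph.fin

/-- A finite simple graph colored by `c` unary predicates. -/
structure CGraph (c : ℕ) : Type 1 where
  V : Type
  [fin : Finite V]
  G : SimpleGraph V
  color : Fin c → Set V

attribute [instance] CGraph.fin

/-! ### First-order formulas over `c`-colored graphs -/

/-- First-order formulas in the language of graphs with `c` unary predicates,
with free variables among `Fin m`. -/
inductive Fml (c : ℕ) : ℕ → Type where
  | eq {m} : Fin m → Fin m → Fml c m
  | adj {m} : Fin m → Fin m → Fml c m
  | col {m} : Fin c → Fin m → Fml c m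
  | not {m} : Fml c m → Fml c m
  | or {m} : Fml c m → Fml c m → Fml c m
  | ex {m} : Fml c (m + 1) → Fml c m

/-- Satisfaction of a first-order formula in a colored graph. -/
def Fml.Sat {c : ℕ} (A : CGraph c) : {m : ℕ} → Fml c m → (Fin m → A.V) → Prop
  | _, .eq i j, v => v i = v j
  | _, .adj i j, v => A.G.Adj (v i) (v j)
  | _, .col i x, v => v x ∈ A.color i
  | _, .not φ, v => ¬ Fml.Sat A φ v
  | _, .or φ ψ, v => Fml.Sat A φ v ∨ Fml.Sat A ψ v
  | _, .ex φ, v => ∃ w : A.V, Fml.Sat A φ (Fin.snoc v w)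

/-! ### Simple interpretations and transductions -/

/-- A simple interpretation of graphs in `c`-colored graphs: a pair of formulas
`(ν(x), η(x,y))` with `η` symmetric and anti-reflexive. -/
structure Interp (c : ℕ) where
  ν : Fml c 1
  η : Fml c 2
  symm : ∀ (A : CGraph c) (u v : A.V), Fml.Sat A η ![u, v] → Fml.Sat A η ![v, u]
  irrefl : ∀ (A : CGraph c) (v : A.V), ¬ Fml.Sat A η ![v, v]

/-- The graph interpreted in a colored graph. -/
def Interp.result {c : ℕ} (I : Interp c) (A : CGraph c) :
    SimpleGraph {v : A.V // Fml.Sat A I.ν ![v]} where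
  Adj u v := Fml.Sat A I.η ![u.1, v.1]
  symm := ⟨fun u v h => I.symm A u.1 v.1 h⟩
  loopless := ⟨fun v h => I.irrefl A v.1 h⟩

/-- The `k`-copy operation on graphs: the copies of a vertex form a clique, and copies
with the same index are adjacent iff the original vertices are. -/
def copyGraph {V : Type} (G : SimpleGraph V) (k : ℕ) : SimpleGraph (V × Fin k) where
  Adj a b := (a.1 = b.1 ∧ a.2 ≠ b.2) ∨ (G.Adj a.1 b.1 ∧ a.2 = b.2)
  symm := by
    constructor
    rintro a b (⟨h1, h2⟩ | ⟨h1, h2⟩)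
    · exact Or.inl ⟨h1.symm, h2.symm⟩
    · exact Or.inr ⟨h1.symm, h2.symm⟩
  loopless := by
    constructor
    rintro a (⟨_, h⟩ | ⟨h, _⟩)
    · exact h rfl
    · exact G.loopless.irrefl _ h

/-- The `k`-copy operation on finite graphs. -/
def FGraph.copy (G : FGraph) (k : ℕ) : FGraph where
  V := G.V × Fin k
  G := copyGraph G.G k

/-- A transduction: a composition `I ∘ Γ_𝒰 ∘ C_k` of a copy operation, a coloring
operation and a simple interpretation. -/
structure Transduction where
  k : ℕ
  kpos : 0 < k
  c : ℕ
  I : Interp c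

/-- The colored graph obtained from `C_k(G)` by a choice of coloring. -/
def Transduction.copyCGraph (T : Transduction) (G : FGraph)
    (color : Fin T.c → Set (G.V × Fin T.k)) : CGraph T.c where
  V := G.V × Fin T.k
  G := copyGraph G.G T.k
  color := color

/-- `H ∈ T(G)` (up to isomorphism). -/
def Transduction.mem (T : Transduction) (G H : FGraph) : Prop :=
  ∃ color : Fin T.c → Set (G.V × Fin T.k),
    Nonempty (H.G ≃g T.I.result (T.copyCGraph G color))

/-- The image `T(𝒟)` of a class of graphs under a transduction. -/
def TImage (T : Transduction) (D : Set FGraph) : Set FGraph :=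
  {H | ∃ G ∈ D, T.mem G H}

/-- `𝒞 ⊑_FO 𝒟` : `𝒞` is a first-order transduction of `𝒟`. -/
def SqFO (C D : Set FGraph) : Prop := ∃ T : Transduction, C ⊆ TImage T D

/-- `𝒞 ⊑°_FO 𝒟` : `𝒞` is a non-copying first-order transduction of `𝒟`. -/
def SqFOnc (C D : Set FGraph) : Prop := ∃ T : Transduction, T.k = 1 ∧ C ⊆ TImage T D

/-- `𝒞 ≡_FO 𝒟`. -/
def EquivFO (C D : Set FGraph) : Prop := SqFO C D ∧ SqFO D C

/-- `T'` subsumes `T` : `T'(G) ⊇ T(G)` for every graph `G`. -/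
def Subsumes (T' T : Transduction) : Prop := ∀ G H : FGraph, T.mem G H → T'.mem G H

/-! ### Perturbations -/

/-- The subset complementation `⊕M`: complement the adjacency between distinct
vertices that both belong to `M`. -/
def scompGraph {V : Type} (G : SimpleGraph V) (M : Set V) : SimpleGraph V where
  Adj u v := u ≠ v ∧ (G.Adj u v ↔ ¬(u ∈ M ∧ v ∈ M))
  symm := by
    constructor
    rintro u v ⟨h1, h2⟩
    refine ⟨h1.symm, ?_, ?_⟩
    · intro h hm
      exact (h2.mp (G.adj_symm h)) ⟨hm.2, hm.1⟩
    · intro h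
      exact G.adj_symm (h2.mpr fun hm => h ⟨hm.2, hm.1⟩)
  loopless := ⟨fun v h => h.1 rfl⟩

/-- Applying a finite sequence of subset complementations. -/
def perturbGraph {V : Type} : List (Set V) → SimpleGraph V → SimpleGraph V
  | [], G => G
  | M :: Ms, G => perturbGraph Ms (scompGraph G M)

/-- `H ∈ P(G)` for a perturbation `P` that is the composition of `p` subset
complementations (up to isomorphism). -/
def PerturbMem (p : ℕ) (G H : FGraph) : Prop :=
  ∃ Z : Fin p → Set G.V, Nonempty (H.G ≃g perturbGraph (List.ofFn Z) G.G)

/-- The image `P(𝒟)` of a class under a perturbation with `p` marks. -/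
def PerturbImage (p : ℕ) (D : Set FGraph) : Set FGraph :=
  {H | ∃ G ∈ D, PerturbMem p G H}

/-- `𝒞` is a perturbation of `𝒟`. -/
def IsPerturbationOfClass (C D : Set FGraph) : Prop := ∃ p, C ⊆ PerturbImage p D

/-! ### Locality -/

/-- The ball of radius `r` around a set `S` of vertices. -/
def ballSet {V : Type} (G : SimpleGraph V) (r : ℕ) (S : Set V) : Set V :=
  {v | ∃ u ∈ S, G.Reachable u v ∧ G.dist u v ≤ r}

lemma mem_ballSet_self {V : Type} (G : SimpleGraph V) (r : ℕ) {S : Set V} {v : V}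
    (hv : v ∈ S) : v ∈ ballSet G r S :=
  ⟨v, hv, Reachable.refl v, by rw [SimpleGraph.dist_self]; exact Nat.zero_le r⟩

/-- The colored subgraph induced on a set of vertices. -/
def CGraph.induce {c : ℕ} (A : CGraph c) (S : Set A.V) : CGraph c where
  V := ↥S
  G := A.G.induce S
  color := fun i => {v | (v : A.V) ∈ A.color i}

/-- A formula is `r`-local if its truth only depends on the subgraph induced by the
ball of radius `r` around its free variables. -/
def IsLocalFml {c m : ℕ} (r : ℕ) (φ : Fml c m) : Prop :=
  ∀ (A : CGraph c) (v : Fin m → A.V),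
    Fml.Sat A φ v ↔
      Fml.Sat (A.induce (ballSet A.G r (Set.range v))) φ
        (fun i => ⟨v i, mem_ballSet_self A.G r (Set.mem_range_self i)⟩)

/-- A formula is strongly `r`-local if it is `r`-local and, whenever it holds of a
tuple, the entries of the tuple are pairwise at distance at most `r`. -/
def IsStronglyLocalFml {c m : ℕ} (r : ℕ) (φ : Fml c m) : Prop :=
  IsLocalFml r φ ∧
    ∀ (A : CGraph c) (v : Fin m → A.V), Fml.Sat A φ v →
      ∀ i j : Fin m, A.G.Reachable (v i) (v j) ∧ A.G.dist (v i) (v j) ≤ r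

/-- An immersive transduction: non-copying, with strongly local formulas. -/
def Transduction.Immersive (T : Transduction) : Prop :=
  T.k = 1 ∧ ∃ r : ℕ, IsStronglyLocalFml r T.I.ν ∧ IsStronglyLocalFml r T.I.η

/-! ### Graph classes -/

/-- A set of graphs closed under isomorphism. -/
def IsoClosed (C : Set FGraph) : Prop :=
  ∀ G H : FGraph, Nonempty (G.G ≃g H.G) → G ∈ C → H ∈ C

/-- `H` is (isomorphic to) an induced subgraph of `G`. -/
def IsInducedSubgraphOf (H G : FGraph) : Prop :=
  ∃ f : H.V → G.V, Function.Injective f ∧ ∀ u v, H.G.Adj u v ↔ G.G.Adj (f u) (f v)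

/-- A hereditary class: closed under induced subgraphs. -/
def HereditaryClass (C : Set FGraph) : Prop :=
  ∀ G ∈ C, ∀ H : FGraph, IsInducedSubgraphOf H G → H ∈ C

/-- `H` is (isomorphic to) a subgraph of `G`. -/
def IsSubgraphOf (H G : FGraph) : Prop :=
  ∃ f : H.V → G.V, Function.Injective f ∧ ∀ u v, H.G.Adj u v → G.G.Adj (f u) (f v)

/-- The monotone closure of a class: all subgraphs of its members. -/
def monotoneClosure (C : Set FGraph) : Set FGraph :=
  {H | ∃ G ∈ C, IsSubgraphOf H G}

/-- `G` contains `K_{t,t}` as a subgraph. -/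
def HasKtt {V : Type} (G : SimpleGraph V) (t : ℕ) : Prop :=
  ∃ a b : Fin t → V, Function.Injective a ∧ Function.Injective b ∧
    (∀ i j, a i ≠ b j) ∧ ∀ i j, G.Adj (a i) (b j)

/-- A weakly sparse class: some `K_{t,t}` is a subgraph of no member. -/
def WeaklySparse (C : Set FGraph) : Prop := ∃ t : ℕ, ∀ G ∈ C, ¬ HasKtt G.G t

/-- Disjoint union of two graphs. -/
def sumGraph {V W : Type} (G : SimpleGraph V) (H : SimpleGraph W) : SimpleGraph (V ⊕ W) where
  Adj a b := match a, b with
    | .inl u, .inl v => G.Adj u v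
    | .inr u, .inr v => H.Adj u v
    | _, _ => False
  symm := by
    constructor
    rintro (u | u) (v | v) h
    · exact G.adj_symm h
    · exact h.elim
    · exact h.elim
    · exact H.adj_symm h
  loopless := by
    constructor
    rintro (v | v) h
    · exact G.loopless.irrefl _ h
    · exact H.loopless.irrefl _ h

/-- Disjoint union of finite graphs. -/
def FGraph.disjUnion (G H : FGraph) : FGraph where
  V := G.V ⊕ H.V
  G := sumGraph G.G H.G

/-- An addable class: closed under disjoint unions. -/
def Addable (C : Set FGraph) : Prop :=
  ∀ G ∈ C, ∀ H ∈ C, FGraph.disjUnion G H ∈ C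

/-- The degree of a vertex. -/
noncomputable def degCard (G : FGraph) (v : G.V) : ℕ := Nat.card {u : G.V // G.G.Adj v u}

/-- A class with bounded maximum degree. -/
def BddDegree (C : Set FGraph) : Prop := ∃ D : ℕ, ∀ G ∈ C, ∀ v : G.V, degCard G v ≤ D
/-! ### Further graph constructions and parameters -/

/-- Auxiliary instance. -/
instance {α : Type} [Finite α] : Finite (Option α) :=
  Finite.of_equiv _ (Equiv.optionEquivSumPUnit.{0,0} α).symm

/-- Adding an apex vertex adjacent to all vertices. -/
def apexGraph {V : Type} (G : SimpleGraph V) : SimpleGraph (Option V) where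
  Adj a b := match a, b with
    | none, none => False
    | none, some _ => True
    | some _, none => True
    | some u, some v => G.Adj u v
  symm := by
    constructor
    rintro (_ | u) (_ | v) h
    · exact h.elim
    · trivial
    · trivial
    · exact G.adj_symm h
  loopless := by
    constructor
    rintro (_ | v) h
    · exact h.elim
    · exact G.loopless.irrefl _ h

/-- The class `𝒞 ∨ K₁` of graphs of `𝒞` with an added apex. -/
def JoinK1 (C : Set FGraph) : Set FGraph :=
  {H | ∃ G ∈ C, Nonempty (H.G ≃g apexGraph G.G)}

/-- The ball of radius `r` around a vertex, as a finite graph. -/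
def ballFGraph (G : FGraph) (r : ℕ) (v : G.V) : FGraph where
  V := ↥(ballSet G.G r {v})
  G := G.G.induce (ballSet G.G r {v})

/-- The class `𝓛_r(ℱ)` of all balls of radius `r` of graphs of `ℱ`. -/
def LocClass (r : ℕ) (F : Set FGraph) : Set FGraph :=
  {H | ∃ G ∈ F, ∃ v : G.V, Nonempty (H.G ≃g (ballFGraph G r v).G)}

/-- Adding a pendant vertex adjacent only to `v`. -/
def pendantGraph {V : Type} (G : SimpleGraph V) (v : V) : SimpleGraph (Option V) where
  Adj a b := match a, b with
    | none, none => False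
    | none, some w => w = v
    | some u, none => u = v
    | some u, some w => G.Adj u w
  symm := by
    constructor
    rintro (_ | u) (_ | w) h
    · exact h.elim
    · exact h
    · exact h
    · exact G.adj_symm h
  loopless := by
    constructor
    rintro (_ | w) h
    · exact h.elim
    · exact G.loopless.irrefl _ h

/-- The finite graph obtained by adding a pendant vertex at `v`. -/
def FGraph.addPendant (G : FGraph) (v : G.V) : FGraph where
  V := Option G.V
  G := pendantGraph G.G v

/-- `G` is obtained from `H` by adding at most `h` vertices, joined arbitrarily. -/
def NearlyOf (h : ℕ) (G H : FGraph) : Prop :=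
  ∃ f : H.V → G.V, Function.Injective f ∧
    (∀ u v, H.G.Adj u v ↔ G.G.Adj (f u) (f v)) ∧
    Nat.card {v : G.V // v ∉ Set.range f} ≤ h

/-- The class `𝒞` is nearly `𝒟`. -/
def Nearly (C D : Set FGraph) : Prop :=
  ∃ h : ℕ, ∀ G ∈ C, ∃ H ∈ D, NearlyOf h G H

/-- The class `ℰ` of all edgeless graphs. -/
def EdgelessClass : Set FGraph := {G | ∀ u v : G.V, ¬ G.G.Adj u v}

/-- All members of the class have connected components of bounded size. -/
def BddComponents (D : Set FGraph) : Prop :=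
  ∃ n : ℕ, ∀ G ∈ D, ∀ v : G.V, Nat.card {u : G.V // G.G.Reachable v u} ≤ n

/-- The class of all cubic (3-regular) graphs. -/
def CubicClass : Set FGraph := {G | ∀ v : G.V, degCard G v = 3}

/-- The class `𝒫` of all paths. -/
def PathClass : Set FGraph :=
  {G | ∃ n : ℕ, Nonempty (G.G ≃g SimpleGraph.pathGraph n)}

/-- The `ℓ`-th power of a graph: two vertices are adjacent iff their distance
is between `1` and `ℓ`. -/
def powGraph {V : Type} (G : SimpleGraph V) (ℓ : ℕ) : SimpleGraph V where
  Adj u v := u ≠ v ∧ G.Reachable u v ∧ G.dist u v ≤ ℓ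
  symm := by
    constructor
    rintro u v ⟨h1, h2, h3⟩
    exact ⟨h1.symm, h2.symm, by rwa [SimpleGraph.dist_comm]⟩
  loopless := ⟨fun v h => h.1 rfl⟩

/-- The bandwidth of `G` is at most `ℓ` : `G` is a subgraph of the `ℓ`-th power
of a path. -/
def BandwidthLE (G : FGraph) (ℓ : ℕ) : Prop :=
  ∃ n : ℕ, ∃ f : G.V → Fin n, Function.Injective f ∧
    ∀ u v, G.G.Adj u v → (powGraph (SimpleGraph.pathGraph n) ℓ).Adj (f u) (f v)

/-- A class with bounded bandwidth. -/
def BddBandwidth (D : Set FGraph) : Prop := ∃ ℓ : ℕ, ∀ G ∈ D, BandwidthLE G ℓ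

/-- The class of all cubic trees: trees all of whose vertices have degree 3 or 1. -/
def CubicTreeClass : Set FGraph :=
  {G | G.G.IsTree ∧ ∀ v : G.V, degCard G v = 3 ∨ degCard G v = 1}

/-- `H` contains a clique on `s` vertices. -/
def HasCliqueN {V : Type} (H : SimpleGraph V) (s : ℕ) : Prop :=
  ∃ f : Fin s → V, Function.Injective f ∧ ∀ i j, i ≠ j → H.Adj (f i) (f j)

/-- A chordal graph: no induced cycle of length at least 4. -/
def IsChordal {V : Type} (H : SimpleGraph V) : Prop :=
  ∀ n : ℕ, 4 ≤ n → ¬ ∃ f : Fin n → V, Function.Injective f ∧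
    ∀ i j, (SimpleGraph.cycleGraph n).Adj i j ↔ H.Adj (f i) (f j)

/-- `tw(G) ≤ n` : `G` is a subgraph of a chordal graph with clique number at most `n+1`. -/
def TreewidthLE (G : FGraph) (n : ℕ) : Prop :=
  ∃ H : SimpleGraph G.V, IsChordal H ∧ G.G ≤ H ∧ ¬ HasCliqueN H (n + 2)

/-- A class with bounded treewidth. -/
def BddTreewidth (D : Set FGraph) : Prop := ∃ n : ℕ, ∀ G ∈ D, TreewidthLE G n

/-- An interval graph: the intersection graph of a family of real intervals. -/
def IsIntervalGraph {V : Type} (H : SimpleGraph V) : Prop :=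
  ∃ l r : V → ℝ, (∀ v, l v ≤ r v) ∧
    ∀ u v, u ≠ v → (H.Adj u v ↔ (l u ≤ r v ∧ l v ≤ r u))

/-- `pw(G) ≤ n` : `G` is a subgraph of an interval graph with clique number at
most `n+1`. -/
def PathwidthLE (G : FGraph) (n : ℕ) : Prop :=
  ∃ H : SimpleGraph G.V, IsIntervalGraph H ∧ G.G ≤ H ∧ ¬ HasCliqueN H (n + 2)

/-- The class `𝒫𝒲_n` of all graphs of pathwidth at most `n`. -/
def PWClass (n : ℕ) : Set FGraph := {G | PathwidthLE G n}

/-- `G` is a forest of depth at most `n` : it is acyclic and roots may be chosen,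
one in each connected component, such that every vertex is at distance at most
`n - 1` from the root of its component. -/
def ForestDepthLE (n : ℕ) (G : FGraph) : Prop :=
  G.G.IsAcyclic ∧ ∃ ρ : G.V → G.V,
    (∀ v, G.G.Reachable (ρ v) v ∧ G.G.dist (ρ v) v ≤ n - 1) ∧
    ∀ u v, G.G.Reachable u v → ρ u = ρ v

/-- The class `𝒯_n` of forests of depth at most `n`. -/
def TreeDepthClass (n : ℕ) : Set FGraph := {G | ForestDepthLE n G}

/-- A star forest: an acyclic graph with no path on four distinct vertices. -/
def IsStarForest (G : FGraph) : Prop :=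
  G.G.IsAcyclic ∧ ∀ a b c d : G.V, G.G.Adj a b → G.G.Adj b c → G.G.Adj c d →
    a = c ∨ b = d ∨ a = d

/-- The class `𝒯₂` of all star forests. -/
def StarForestClass : Set FGraph := {G | IsStarForest G}

/-- `H` is a depth-`r` shallow minor of `G` : it is obtained by contracting
pairwise disjoint connected subgraphs of radius at most `r` and deleting
vertices and edges. -/
def IsShallowMinor (r : ℕ) (H G : FGraph) : Prop :=
  ∃ φ : H.V → Set G.V,
    (∀ v, (φ v).Nonempty) ∧
    (∀ u v, u ≠ v → Disjoint (φ u) (φ v)) ∧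
    (∀ v : H.V, ∃ c : ↥(φ v), ∀ u : ↥(φ v),
      (G.G.induce (φ v)).Reachable c u ∧ (G.G.induce (φ v)).dist c u ≤ r) ∧
    (∀ u v : H.V, H.G.Adj u v → ∃ a ∈ φ u, ∃ b ∈ φ v, G.G.Adj a b)

/-- The average degree of `H` is at most `d`. -/
def AvgDegLE (H : FGraph) (d : ℕ) : Prop :=
  2 * Nat.card H.G.edgeSet ≤ d * Nat.card H.V

/-- A class of bounded expansion: for some `f : ℕ → ℕ`, every depth-`r` shallow
minor of a member has average degree at most `f r`. -/
def BoundedExpansion (C : Set FGraph) : Prop :=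
  ∃ f : ℕ → ℕ, ∀ r : ℕ, ∀ G ∈ C, ∀ H : FGraph, IsShallowMinor r H G → AvgDegLE H (f r)

/-- A proper coloring `f` of `G` with `n` colors is a star coloring if no path on
four vertices receives only two colors. -/
def IsStarColoring {V : Type} (G : SimpleGraph V) (n : ℕ) (f : V → Fin n) : Prop :=
  (∀ u v, G.Adj u v → f u ≠ f v) ∧
  ∀ a b c d, G.Adj a b → G.Adj b c → G.Adj c d → a ≠ c → b ≠ d → a ≠ d →
    ¬ (f a = f c ∧ f b = f d)

/-- A class with bounded star chromatic number. -/
def BddStarChrom (C : Set FGraph) : Prop :=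
  ∃ n : ℕ, ∀ G ∈ C, ∃ f : G.V → Fin n, IsStarColoring G.G n f


/-! ### Auxiliary lemmas -/

section Aux

open Function

/-- Conjunction of formulas. -/
def Fml.and {c m : ℕ} (φ ψ : Fml c m) : Fml c m := .not (.or (.not φ) (.not ψ))

@[simp] lemma Fml.sat_and {c m : ℕ} (A : CGraph c) (φ ψ : Fml c m) (v : Fin m → A.V) :
    Fml.Sat A (Fml.and φ ψ) v ↔ Fml.Sat A φ v ∧ Fml.Sat A ψ v := by
  simp only [Fml.and, Fml.Sat]; tauto

lemma snoc_vec1 {α : Type*} (x y : α) : (Fin.snoc ![x] y : Fin 2 → α) = ![x, y] := by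
  funext i
  fin_cases i <;> simp [Fin.snoc]

lemma comp_vec1 {α β : Type*} (f : α → β) (x : α) : f ∘ ![x] = ![f x] := by
  funext i; fin_cases i <;> rfl

lemma comp_vec2 {α β : Type*} (f : α → β) (x y : α) : f ∘ ![x, y] = ![f x, f y] := by
  funext i; fin_cases i <;> rfl

/-- Satisfaction is invariant under isomorphisms of colored graphs. -/
lemma sat_iso {c : ℕ} {A B : CGraph c} (e : A.V ≃ B.V)
    (hadj : ∀ u v, A.G.Adj u v ↔ B.G.Adj (e u) (e v))
    (hcol : ∀ i x, x ∈ A.color i ↔ e x ∈ B.color i) :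
    ∀ {m : ℕ} (φ : Fml c m) (v : Fin m → A.V), Fml.Sat A φ v ↔ Fml.Sat B φ (e ∘ v) := by
  intro m φ
  induction φ with
  | eq i j =>
      intro v
      simp only [Fml.Sat, Function.comp_apply]
      exact ⟨fun h => by rw [h], fun h => e.injective h⟩
  | adj i j => intro v; exact hadj _ _
  | col i x => intro v; exact hcol _ _
  | not φ ih => intro v; simp only [Fml.Sat]; rw [ih]
  | or φ ψ ih1 ih2 => intro v; simp only [Fml.Sat]; rw [ih1, ih2]
  | ex φ ih =>
      intro v
      simp only [Fml.Sat]
      constructor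
      · rintro ⟨w, hw⟩
        refine ⟨e w, ?_⟩
        rw [← Fin.comp_snoc]
        exact (ih _).mp hw
      · rintro ⟨w, hw⟩
        refine ⟨e.symm w, (ih _).mpr ?_⟩
        rw [Fin.comp_snoc]
        simpa using hw

/-- Lifting a formula to one more color. -/
def Fml.lift {c : ℕ} : ∀ {m : ℕ}, Fml c m → Fml (c + 1) m
  | _, .eq i j => .eq i j
  | _, .adj i j => .adj i j
  | _, .col i x => .col i.castSucc x
  | _, .not φ => .not φ.lift
  | _, .or φ ψ => .or φ.lift ψ.lift
  | _, .ex φ => .ex φ.lift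

/-- Forgetting the last color. -/
def CGraph.reduct {c : ℕ} (A : CGraph (c + 1)) : CGraph c where
  V := A.V
  G := A.G
  color := fun i => A.color i.castSucc

@[simp] lemma sat_lift {c : ℕ} (A : CGraph (c + 1)) : ∀ {m : ℕ} (φ : Fml c m)
    (v : Fin m → A.V), Fml.Sat A φ.lift v ↔ Fml.Sat A.reduct φ v := by
  intro m φ
  induction φ with
  | eq i j => intro v; exact Iff.rfl
  | adj i j => intro v; exact Iff.rfl
  | col i x => intro v; exact Iff.rfl
  | not φ ih => intro v; simp only [Fml.lift, Fml.Sat]; rw [ih]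
  | or φ ψ ih1 ih2 => intro v; simp only [Fml.lift, Fml.Sat]; rw [ih1, ih2]
  | ex φ ih =>
      intro v
      simp only [Fml.lift, Fml.Sat]
      exact exists_congr fun w => ih _

/-- Walks in induced subgraphs project to walks in the ambient graph. -/
lemma walk_proj {V : Type} {G : SimpleGraph V} {s : Set V} :
    ∀ {a b : ↥s} (p : (G.induce s).Walk a b), ∃ q : G.Walk a.1 b.1, q.length = p.length := by
  intro a b p
  induction p with
  | nil => exact ⟨.nil, rfl⟩
  | cons h p ih =>
      obtain ⟨q, hq⟩ := ih
      exact ⟨.cons h q, congrArg (· + 1) hq⟩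

lemma reach_dist_proj {V : Type} {G : SimpleGraph V} {s : Set V} {a b : ↥s} {n : ℕ}
    (h : (G.induce s).Reachable a b ∧ (G.induce s).dist a b ≤ n) :
    G.Reachable a.1 b.1 ∧ G.dist a.1 b.1 ≤ n := by
  obtain ⟨p, hp⟩ := h.1.exists_walk_length_eq_dist
  obtain ⟨q, hq⟩ := walk_proj p
  exact ⟨⟨q⟩, le_trans (SimpleGraph.dist_le q) (by omega)⟩

/-- Walks whose support lies in `s` lift to the induced subgraph. -/
lemma walk_lift {V : Type} {G : SimpleGraph V} {s : Set V} :
    ∀ {a b : V} (p : G.Walk a b), (∀ x ∈ p.support, x ∈ s) → ∀ (ha : a ∈ s) (hb : b ∈ s),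
      ∃ q : (G.induce s).Walk ⟨a, ha⟩ ⟨b, hb⟩, q.length = p.length := by
  intro a b p
  induction p with
  | nil => intro _ ha hb; exact ⟨.nil, rfl⟩
  | @cons a c b h p ih =>
      intro hp ha hb
      have hc : c ∈ s := hp c (by simp)
      obtain ⟨q, hq⟩ := ih (fun x hx => hp x (by simp [hx])) hc hb
      exact ⟨.cons (by exact h) q, congrArg (· + 1) hq⟩

lemma reach_dist_of_mem_support {V : Type} {G : SimpleGraph V} {a b x : V} (p : G.Walk a b)
    (hx : x ∈ p.support) : G.Reachable a x ∧ G.dist a x ≤ p.length := by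
  classical
  exact ⟨⟨p.takeUntil x hx⟩,
    le_trans (SimpleGraph.dist_le _) (SimpleGraph.Walk.length_takeUntil_le p hx)⟩

lemma reach_dist_trans {V : Type} {G : SimpleGraph V} {a b c : V} {m n : ℕ}
    (h1 : G.Reachable a b) (h2 : G.dist a b ≤ m) (h3 : G.Reachable b c)
    (h4 : G.dist b c ≤ n) : G.Reachable a c ∧ G.dist a c ≤ m + n := by
  obtain ⟨p, hp⟩ := h1.exists_walk_length_eq_dist
  obtain ⟨q, hq⟩ := h3.exists_walk_length_eq_dist
  refine ⟨⟨p.append q⟩, le_trans (SimpleGraph.dist_le (p.append q)) ?_⟩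
  rw [SimpleGraph.Walk.length_append]
  omega

lemma mem_ballSet_singleton {V : Type} {G : SimpleGraph V} {r : ℕ} {w z : V} :
    z ∈ ballSet G r {w} ↔ G.Reachable w z ∧ G.dist w z ≤ r := by
  simp [ballSet]

/-- Reachability and distances in a ball of radius `2r` agree with the ambient graph,
for pairs at distance at most `r` where one endpoint is at distance at most `r`
from the center. -/
lemma ball_corr {V : Type} {G : SimpleGraph V} {r : ℕ} {w u z : V}
    (hu : G.Reachable w u ∧ G.dist w u ≤ r)
    (hus : u ∈ ballSet G (2 * r) {w}) (hzs : z ∈ ballSet G (2 * r) {w}) :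
    ((G.induce (ballSet G (2 * r) {w})).Reachable ⟨u, hus⟩ ⟨z, hzs⟩ ∧
      (G.induce (ballSet G (2 * r) {w})).dist ⟨u, hus⟩ ⟨z, hzs⟩ ≤ r) ↔
    (G.Reachable u z ∧ G.dist u z ≤ r) := by
  constructor
  · exact reach_dist_proj
  · rintro ⟨h1, h2⟩
    obtain ⟨p, hp⟩ := h1.exists_walk_length_eq_dist
    have hsupp : ∀ x ∈ p.support, x ∈ ballSet G (2 * r) {w} := by
      intro x hx
      obtain ⟨hr1, hr2⟩ := reach_dist_of_mem_support p hx
      have hpl : p.length ≤ r := by rw [hp]; exact h2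
      have h3 := reach_dist_trans hu.1 hu.2 hr1 (le_trans hr2 hpl)
      exact mem_ballSet_singleton.mpr ⟨h3.1, by omega⟩
    obtain ⟨q, hq⟩ := walk_lift p hsupp hus hzs
    exact ⟨⟨q⟩, le_trans (SimpleGraph.dist_le q) (by omega)⟩

/-- The master transfer lemma: a local formula holds in `A` on a tuple near `w`
iff it holds in the ball of radius `2r` around `w`. -/
lemma transfer {c m r : ℕ} {φ : Fml c m} (hφ : IsLocalFml r φ)
    (A : CGraph c) (w : A.V) (v' : Fin m → ↥(ballSet A.G (2 * r) {w}))
    (hv : ∀ i, A.G.Reachable w (v' i).1 ∧ A.G.dist w (v' i).1 ≤ r) :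
    Fml.Sat A φ (fun i => (v' i).1) ↔
      Fml.Sat (A.induce (ballSet A.G (2 * r) {w})) φ v' := by
  rw [hφ A (fun i => (v' i).1), hφ (A.induce (ballSet A.G (2 * r) {w})) v']
  have hmem1 : ∀ y : A.V, y ∈ ballSet A.G r (Set.range (fun i => (v' i).1)) →
      y ∈ ballSet A.G (2 * r) {w} := by
    rintro y ⟨u, ⟨i, rfl⟩, hr1, hr2⟩
    have h3 := reach_dist_trans (hv i).1 (hv i).2 hr1 hr2
    exact mem_ballSet_singleton.mpr ⟨h3.1, by omega⟩
  have point : ∀ z : ↥(ballSet A.G (2 * r) {w}),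
      z ∈ ballSet ((A.induce (ballSet A.G (2 * r) {w})).G) r (Set.range v') ↔
      z.1 ∈ ballSet A.G r (Set.range (fun i => (v' i).1)) := by
    intro z
    constructor
    · rintro ⟨u, ⟨i, rfl⟩, hr⟩
      exact ⟨(v' i).1, ⟨i, rfl⟩, (ball_corr (hv i) (v' i).2 z.2).mp hr⟩
    · rintro ⟨u, ⟨i, rfl⟩, hr⟩
      exact ⟨v' i, ⟨i, rfl⟩, (ball_corr (hv i) (v' i).2 z.2).mpr hr⟩
  let e : ↥(ballSet ((A.induce (ballSet A.G (2 * r) {w})).G) r (Set.range v')) ≃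
      ↥(ballSet A.G r (Set.range (fun i => (v' i).1))) :=
    { toFun := fun z => ⟨z.1.1, (point z.1).mp z.2⟩
      invFun := fun y => ⟨⟨y.1, hmem1 y.1 y.2⟩, (point _).mpr y.2⟩
      left_inv := fun z => Subtype.ext (Subtype.ext rfl)
      right_inv := fun y => Subtype.ext rfl }
  have key := sat_iso
      (A := (A.induce (ballSet A.G (2 * r) {w})).induce
        (ballSet ((A.induce (ballSet A.G (2 * r) {w})).G) r (Set.range v')))
      (B := A.induce (ballSet A.G r (Set.range (fun i => (v' i).1)))) e
      (fun u v => Iff.rfl) (fun i x => Iff.rfl) φ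
      (fun i => ⟨v' i, mem_ballSet_self _ _ (Set.mem_range_self i)⟩)
  rw [iff_comm]
  exact key

@[simp] lemma copyGraph_one_adj {V : Type} (G : SimpleGraph V) (a b : V × Fin 1) :
    (copyGraph G 1).Adj a b ↔ G.Adj a.1 b.1 := by
  constructor
  · rintro (⟨h1, h2⟩ | ⟨h1, h2⟩)
    · exact absurd (Subsingleton.elim a.2 b.2) h2
    · exact h1
  · intro h
    exact Or.inr ⟨h, Subsingleton.elim _ _⟩

lemma reach_dist_equiv {V W : Type} {G : SimpleGraph V} {H : SimpleGraph W} (e : V ≃ W)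
    (he : ∀ a b, G.Adj a b ↔ H.Adj (e a) (e b)) (u v : V) :
    (G.Reachable u v ↔ H.Reachable (e u) (e v)) ∧ G.dist u v = H.dist (e u) (e v) := by
  let iso : G ≃g H := ⟨e, fun {a b} => (he a b).symm⟩
  have hreach : G.Reachable u v ↔ H.Reachable (e u) (e v) :=
    (SimpleGraph.Iso.reachable_iff (φ := iso)).symm
  refine ⟨hreach, ?_⟩
  by_cases h : G.Reachable u v
  · refine le_antisymm ?_ ?_
    · obtain ⟨q, hq⟩ := (hreach.mp h).exists_walk_length_eq_dist
      have h2 := SimpleGraph.dist_le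
        ((q.map iso.symm.toHom).copy (e.symm_apply_apply u) (e.symm_apply_apply v))
      exact h2.trans (le_of_eq ((SimpleGraph.Walk.length_copy _ _ _).trans ((SimpleGraph.Walk.length_map _ _).trans hq)))
    · obtain ⟨p, hp⟩ := h.exists_walk_length_eq_dist
      have h2 := SimpleGraph.dist_le (p.map iso.toHom)
      rw [SimpleGraph.Walk.length_map, hp] at h2
      exact h2
  · have h' : ¬ H.Reachable (e u) (e v) := fun hh => h (hreach.mpr hh)
    rw [SimpleGraph.dist_eq_zero_of_not_reachable h,
      SimpleGraph.dist_eq_zero_of_not_reachable h']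

/-- The modified interpretation: vertices are non-marked `ν`-vertices `η`-adjacent to a
marked vertex. -/
def Interp.apexFree {c : ℕ} (I : Interp c) : Interp (c + 1) where
  ν := Fml.and (.not (.col (Fin.last c) 0))
        (Fml.and I.ν.lift (.ex (Fml.and (.col (Fin.last c) 1) I.η.lift)))
  η := I.η.lift
  symm := fun A u v h => (sat_lift A I.η ![v, u]).mpr
    (I.symm A.reduct u v ((sat_lift A I.η ![u, v]).mp h))
  irrefl := fun A v h => I.irrefl A.reduct v ((sat_lift A I.η ![v, v]).mp h)

lemma sat_apexFree_ν {c : ℕ} (I : Interp c) (A : CGraph (c + 1)) (x : A.V) :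
    Fml.Sat A I.apexFree.ν ![x] ↔
      (x ∉ A.color (Fin.last c) ∧ Fml.Sat A.reduct I.ν ![x] ∧
        ∃ y, y ∈ A.color (Fin.last c) ∧ Fml.Sat A.reduct I.η ![x, y]) := by
  simp only [Interp.apexFree, Fml.sat_and, Fml.Sat, sat_lift, snoc_vec1,
    Matrix.cons_val_zero, Matrix.cons_val_one, Matrix.head_cons]
  tauto

/-- Interpretation results along colored isomorphisms. -/
noncomputable def resultIso {c : ℕ} (I : Interp c) {A B : CGraph c} (e : A.V ≃ B.V)
    (hadj : ∀ u v, A.G.Adj u v ↔ B.G.Adj (e u) (e v))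
    (hcol : ∀ i x, x ∈ A.color i ↔ e x ∈ B.color i) :
    I.result A ≃g I.result B := by
  refine ⟨Equiv.subtypeEquiv e (fun x => ?_), ?_⟩
  · rw [sat_iso e hadj hcol, comp_vec1]
  · intro u v
    show Fml.Sat B I.η _ ↔ Fml.Sat A I.η _
    rw [sat_iso e hadj hcol I.η ![u.1, v.1], comp_vec2]
    simp [Equiv.subtypeEquiv]

end Aux

/-! ### The statement -/

theorem apex_class_transduction_localizes (C F D : Set FGraph) (T : Transduction) (hT : T.Immersive)
    (hD : D ⊆ TImage T F) (hCD : JoinK1 C ⊆ D) :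
    ∃ r : ℕ, SqFOnc C (LocClass r F) := by
  obtain ⟨k, kpos, c, I⟩ := T
  obtain ⟨hk, r, hν, hη⟩ := hT
  have hk' : k = 1 := hk
  subst hk'
  refine ⟨2 * r, ⟨1, Nat.one_pos, c + 1, I.apexFree⟩, rfl, ?_⟩
  intro G hG
  have hH0 : (⟨Option G.V, apexGraph G.G⟩ : FGraph) ∈ JoinK1 C :=
    ⟨G, hG, ⟨SimpleGraph.Iso.refl (G := apexGraph G.G)⟩⟩
  obtain ⟨Hf, hHf, color, ⟨e⟩⟩ := hD (hCD hH0)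
  set A : CGraph c := Transduction.copyCGraph ⟨1, kpos, c, I⟩ Hf color with hA
  let w : A.V := (e none).1
  have key_adj : ∀ o o' : Option G.V, (apexGraph G.G).Adj o o' →
      Fml.Sat A I.η ![(e o).1, (e o').1] := fun o o' h => e.map_rel_iff.mpr h
  have hdist : ∀ o : Option G.V, A.G.Reachable w (e o).1 ∧ A.G.dist w (e o).1 ≤ r := by
    intro o
    cases o with
    | none => exact ⟨SimpleGraph.Reachable.refl _, by rw [SimpleGraph.dist_self]; omega⟩
    | some v =>
        have h := key_adj none (some v) (by trivial)
        have h2 := hη.2 A ![w, (e (some v)).1] h 0 1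
        simpa using h2
  have hmem_s : ∀ o : Option G.V, (e o).1 ∈ ballSet A.G (2 * r) {w} := fun o =>
    mem_ballSet_singleton.mpr ⟨(hdist o).1, le_trans (hdist o).2 (by omega)⟩
  have hws : w ∈ ballSet A.G (2 * r) {w} := mem_ballSet_self _ _ rfl
  let A1 : CGraph (c + 1) := ⟨A.V, A.G, Fin.snoc A.color ({w} : Set A.V)⟩
  let N : CGraph (c + 1) := A1.induce (ballSet A.G (2 * r) {w})
  -- reduct of N is the induced colored graph of A
  have hredN : ∀ {m : ℕ} (φ : Fml c m) (v : Fin m → ↥(ballSet A.G (2 * r) {w})),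
      Fml.Sat N.reduct φ v ↔ Fml.Sat (A.induce (ballSet A.G (2 * r) {w})) φ v := by
    intro m φ v
    have h := sat_iso (A := N.reduct) (B := A.induce (ballSet A.G (2 * r) {w}))
      (Equiv.refl _) (fun _ _ => Iff.rfl)
      (fun i x => by
        simp only [CGraph.reduct, CGraph.induce, N, A1, Set.mem_setOf_eq,
          Fin.snoc_castSucc, Equiv.refl_apply]; exact Iff.rfl)
      φ v
    exact h
  -- transfer of the formulas between `A` and the ball
  have trans1 : ∀ (x : ↥(ballSet A.G (2 * r) {w})),
      (A.G.Reachable w x.1 ∧ A.G.dist w x.1 ≤ r) →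
      (Fml.Sat A I.ν ![x.1] ↔ Fml.Sat (A.induce (ballSet A.G (2 * r) {w})) I.ν ![x]) := by
    intro x hx
    have h := transfer (φ := I.ν) hν.1 A w ![x] (by intro i; fin_cases i <;> simpa using hx)
    convert h using 2
    funext i; fin_cases i <;> rfl
    exact Iff.rfl
  have trans2 : ∀ (x y : ↥(ballSet A.G (2 * r) {w})),
      (A.G.Reachable w x.1 ∧ A.G.dist w x.1 ≤ r) →
      (A.G.Reachable w y.1 ∧ A.G.dist w y.1 ≤ r) →
      (Fml.Sat A I.η ![x.1, y.1] ↔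
        Fml.Sat (A.induce (ballSet A.G (2 * r) {w})) I.η ![x, y]) := by
    intro x y hx hy
    have h := transfer (φ := I.η) hη.1 A w ![x, y] (by
      intro i
      fin_cases i
      · simpa using hx
      · simpa using hy)
    convert h using 2
    funext i; fin_cases i <;> rfl
    exact Iff.rfl
  -- characterization of the vertex formula in N
  have hPN : ∀ x : N.V, Fml.Sat N I.apexFree.ν ![x] ↔
      (x.1 ≠ w ∧ Fml.Sat N.reduct I.ν ![x] ∧
        Fml.Sat N.reduct I.η ![x, ⟨w, hws⟩]) := by
    intro x
    rw [sat_apexFree_ν]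
    have hcol : ∀ z : N.V, z ∈ N.color (Fin.last c) ↔ z.1 = w := by
      intro z
      simp only [N, A1, CGraph.induce, Set.mem_setOf_eq, Fin.snoc_last,
        Set.mem_singleton_iff]; exact Iff.rfl
    constructor
    · rintro ⟨h1, h2, y, hy, h3⟩
      have hyw : y = ⟨w, hws⟩ := Subtype.ext ((hcol y).mp hy)
      exact ⟨fun hxw => h1 ((hcol x).mpr hxw), h2, hyw ▸ h3⟩
    · rintro ⟨h1, h2, h3⟩
      exact ⟨fun hx => h1 ((hcol x).mp hx), h2, ⟨w, hws⟩, (hcol _).mpr rfl, h3⟩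
  have satν : ∀ o : Option G.V, Fml.Sat A I.ν ![(e o).1] := fun o => (e o).2
  have hXne : ∀ v : G.V, (e (some v)).1 ≠ w := by
    intro v hvw
    have h := e.injective (Subtype.ext hvw)
    exact absurd h (Option.some_ne_none v)
  have satη_xw : ∀ v : G.V, Fml.Sat A I.η ![(e (some v)).1, w] := fun v =>
    I.symm A _ _ (key_adj none (some v) (by trivial))
  have hwdist : A.G.Reachable w w ∧ A.G.dist w w ≤ r :=
    ⟨SimpleGraph.Reachable.refl _, by rw [SimpleGraph.dist_self]; omega⟩
  have Pfwd : ∀ v : G.V,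
      Fml.Sat N I.apexFree.ν ![⟨(e (some v)).1, hmem_s (some v)⟩] := by
    intro v
    refine (hPN ⟨(e (some v)).1, hmem_s (some v)⟩).mpr ?_
    refine ⟨hXne v, ?_, ?_⟩
    · refine (hredN _ _).mpr ?_
      exact (trans1 ⟨(e (some v)).1, hmem_s (some v)⟩ (hdist (some v))).mp (satν (some v))
    · refine (hredN _ _).mpr ?_
      exact (trans2 ⟨(e (some v)).1, hmem_s (some v)⟩ ⟨w, hws⟩ (hdist (some v))
        hwdist).mp (satη_xw v)
  have Pbwd : ∀ x : N.V, Fml.Sat N I.apexFree.ν ![x] →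
      ∃ v : G.V, (e (some v)).1 = x.1 := by
    intro x hx
    rw [hPN] at hx
    obtain ⟨h1, h2, h3⟩ := hx
    replace h2 := (hredN I.ν ![x]).mp h2
    replace h3 := (hredN I.η ![x, ⟨w, hws⟩]).mp h3
    have h4 := hη.2 (A.induce (ballSet A.G (2 * r) {w})) ![x, ⟨w, hws⟩] h3 1 0
    have h4' : (A.G.induce (ballSet A.G (2 * r) {w})).Reachable ⟨w, hws⟩ x ∧
        (A.G.induce (ballSet A.G (2 * r) {w})).dist ⟨w, hws⟩ x ≤ r := by simpa [CGraph.induce] using h4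
    have h5 : A.G.Reachable w x.1 ∧ A.G.dist w x.1 ≤ r := reach_dist_proj h4'
    have h6 : Fml.Sat A I.ν ![x.1] := (trans1 x h5).mpr h2
    cases ho : e.symm ⟨x.1, h6⟩ with
    | none =>
        exfalso
        have happ := e.apply_symm_apply ⟨x.1, h6⟩
        rw [ho] at happ
        exact h1 (congrArg Subtype.val happ).symm
    | some v =>
        refine ⟨v, ?_⟩
        have happ := e.apply_symm_apply ⟨x.1, h6⟩
        rw [ho] at happ
        exact congrArg Subtype.val happ
  let f : G.V → {x : N.V // Fml.Sat N I.apexFree.ν ![x]} := fun v =>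
    ⟨⟨(e (some v)).1, hmem_s (some v)⟩, Pfwd v⟩
  have hfinj : Function.Injective f := by
    intro u v huv
    have h1 : (e (some u)).1 = (e (some v)).1 := congrArg (fun t => t.1.1) huv
    have h2 := e.injective (Subtype.ext h1)
    exact Option.some_injective _ h2
  have hfsurj : Function.Surjective f := by
    rintro ⟨x, hx⟩
    obtain ⟨v, hv⟩ := Pbwd x hx
    exact ⟨v, Subtype.ext (Subtype.ext hv)⟩
  have hfadj : ∀ u v : G.V,
      Fml.Sat N I.apexFree.η ![(f u).1, (f v).1] ↔ G.G.Adj u v := by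
    intro u v
    have step1 : Fml.Sat N I.apexFree.η ![(f u).1, (f v).1] ↔
        Fml.Sat (A.induce (ballSet A.G (2 * r) {w})) I.η ![(f u).1, (f v).1] := by
      rw [show I.apexFree.η = I.η.lift from rfl, sat_lift]; exact hredN _ _
    rw [step1, ← trans2 (f u).1 (f v).1 (hdist (some u)) (hdist (some v))]
    constructor
    · intro h
      exact e.map_rel_iff.mp h
    · intro h
      exact e.map_rel_iff.mpr h
  -- the host graph: the ball of Hf
  have hadjι : ∀ a b : Hf.V, Hf.G.Adj a b ↔ A.G.Adj (a, 0) (b, 0) := fun a b =>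
    (copyGraph_one_adj Hf.G (a, 0) (b, 0)).symm
  let ι : Hf.V ≃ A.V :=
    { toFun := fun x => (x, 0)
      invFun := fun p => p.1
      left_inv := fun x => rfl
      right_inv := fun p => Prod.ext rfl (Subsingleton.elim _ _) }
  have hball0 : ∀ x : Hf.V, x ∈ ballSet Hf.G (2 * r) {w.1} ↔
      ((x, 0) : A.V) ∈ ballSet A.G (2 * r) {w} := by
    intro x
    have h := reach_dist_equiv ι hadjι w.1 x
    have hw1 : ((w.1, 0) : A.V) = w := Prod.ext rfl (Subsingleton.elim _ _)
    have h1 : Hf.G.Reachable w.1 x ↔ A.G.Reachable w ((x, 0) : A.V) := by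
      rw [← hw1]; exact h.1
    have h2 : Hf.G.dist w.1 x = A.G.dist w ((x, 0) : A.V) := by
      rw [← hw1]; exact h.2
    rw [mem_ballSet_singleton, h1, h2]; exact mem_ballSet_singleton.symm
  let j : (ballFGraph Hf (2 * r) w.1).V × Fin 1 ≃ N.V :=
    { toFun := fun p => ⟨(p.1.1, 0), (hball0 p.1.1).mp p.1.2⟩
      invFun := fun z => (⟨z.1.1, (hball0 z.1.1).mpr (by
          have hz : ((z.1.1, (0 : Fin 1)) : A.V) = z.1 :=
            Prod.ext rfl (Subsingleton.elim _ _)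
          rw [hz]; exact z.2)⟩, 0)
      left_inv := fun p => Prod.ext (Subtype.ext rfl) (Subsingleton.elim _ _)
      right_inv := fun z => Subtype.ext (Prod.ext rfl (Subsingleton.elim _ _)) }
  have hadjj : ∀ p q : (ballFGraph Hf (2 * r) w.1).V × Fin 1,
      (copyGraph (ballFGraph Hf (2 * r) w.1).G 1).Adj p q ↔ N.G.Adj (j p) (j q) := by
    intro p q
    rw [copyGraph_one_adj]
    show Hf.G.Adj p.1.1 q.1.1 ↔ (copyGraph Hf.G 1).Adj (p.1.1, 0) (q.1.1, 0)
    rw [copyGraph_one_adj]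
  refine ⟨ballFGraph Hf (2 * r) w.1, ⟨Hf, hHf, w.1, ⟨SimpleGraph.Iso.refl (G := (ballFGraph Hf (2 * r) w.1).G)⟩⟩,
    fun i => {p | ((j p).1 : A.V) ∈ A1.color i}, ⟨?_⟩⟩
  have hcolj : ∀ (i : Fin (c + 1)) (p : (ballFGraph Hf (2 * r) w.1).V × Fin 1),
      p ∈ {p | ((j p).1 : A.V) ∈ A1.color i} ↔ j p ∈ N.color i := fun i p => Iff.rfl
  have main : G.G ≃g I.apexFree.result N :=
    ⟨Equiv.ofBijective f ⟨hfinj, hfsurj⟩, fun {a b} => hfadj a b⟩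
  exact main.trans (resultIso I.apexFree j hadjj hcolj).symm
end

section
/- Let 𝒞 be a class of graphs with bounded star chromatic number. Then the monotone closure of 𝒞 is a non-copying immersive transduction of 𝒞, i.e. there is a non-copying immersive transduction T such that every subgraph of a member of 𝒞 belongs to T(𝒞). -/
open SimpleGraph

/-! ### Auxiliary constructions for the proof -/

namespace StarTrans

def cN (n : ℕ) : ℕ := n + n + 1

def idxP {n : ℕ} (i : Fin n) : Fin (cN n) := ⟨i.val, by have := i.isLt; unfold cN; omega⟩
def idxC {n : ℕ} (i : Fin n) : Fin (cN n) := ⟨n + i.val, by have := i.isLt; unfold cN; omega⟩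
def idxK (n : ℕ) : Fin (cN n) := ⟨n + n, by unfold cN; omega⟩

def fand {c m : ℕ} (φ ψ : Fml c m) : Fml c m := .not (.or (.not φ) (.not ψ))

lemma sat_fand {c m : ℕ} (A : CGraph c) (φ ψ : Fml c m) (w : Fin m → A.V) :
    Fml.Sat A (fand φ ψ) w ↔ Fml.Sat A φ w ∧ Fml.Sat A ψ w := by
  simp [fand, Fml.Sat]

def atomF {n : ℕ} (i : Fin n) (x y : Fin 2) : Fml (cN n) 2 :=
  fand (.col (idxC i) x) (fand (.col (idxP i) y)
    (.not (.ex (fand (.adj y.castSucc (Fin.last 2))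
      (fand (.col (idxC i) (Fin.last 2)) (.not (.eq (Fin.last 2) x.castSucc)))))))

lemma sat_atom {n : ℕ} (A : CGraph (cN n)) (i : Fin n) (x y : Fin 2) (w : Fin 2 → A.V) :
    Fml.Sat A (atomF i x y) w ↔
      (w x ∈ A.color (idxC i) ∧ w y ∈ A.color (idxP i) ∧
        ∀ z, A.G.Adj (w y) z → z ∈ A.color (idxC i) → z = w x) := by
  simp only [atomF, sat_fand, Fml.Sat, Fin.snoc_castSucc, Fin.snoc_last]
  push_neg
  refine and_congr_right fun _ => and_congr_right fun _ => forall_congr' fun z => ?_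
  tauto

def bigOr {c : ℕ} : List (Fml c 2) → Fml c 2
  | [] => .not (.eq 0 0)
  | φ :: l => .or φ (bigOr l)

lemma sat_bigOr {c : ℕ} (A : CGraph c) (l : List (Fml c 2)) (w : Fin 2 → A.V) :
    Fml.Sat A (bigOr l) w ↔ ∃ φ ∈ l, Fml.Sat A φ w := by
  induction l with
  | nil => simp [bigOr, Fml.Sat]
  | cons φ l ih => simp [bigOr, Fml.Sat, ih]

def halfF {n : ℕ} (x y : Fin 2) : Fml (cN n) 2 :=
  bigOr ((List.finRange n).map fun i => atomF i x y)

def HalfP {n : ℕ} (A : CGraph (cN n)) (x y : A.V) : Prop :=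
  ∃ i : Fin n, x ∈ A.color (idxC i) ∧ y ∈ A.color (idxP i) ∧
    ∀ z, A.G.Adj y z → z ∈ A.color (idxC i) → z = x

lemma sat_half {n : ℕ} (A : CGraph (cN n)) (x y : Fin 2) (w : Fin 2 → A.V) :
    Fml.Sat A (halfF x y) w ↔ HalfP A (w x) (w y) := by
  simp [halfF, sat_bigOr, sat_atom, HalfP]

def etaF (n : ℕ) : Fml (cN n) 2 :=
  fand (.col (idxK n) 0) (fand (.col (idxK n) 1)
    (fand (.adj 0 1) (.or (halfF 0 1) (halfF 1 0))))

def EProp {n : ℕ} (A : CGraph (cN n)) (x y : A.V) : Prop :=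
  x ∈ A.color (idxK n) ∧ y ∈ A.color (idxK n) ∧ A.G.Adj x y ∧
    (HalfP A x y ∨ HalfP A y x)

lemma sat_eta {n : ℕ} (A : CGraph (cN n)) (w : Fin 2 → A.V) :
    Fml.Sat A (etaF n) w ↔ EProp A (w 0) (w 1) := by
  simp only [etaF, sat_fand, Fml.Sat, sat_half, EProp]

def nuF (n : ℕ) : Fml (cN n) 1 := .col (idxK n) 0

lemma sat_nu {n : ℕ} (A : CGraph (cN n)) (w : Fin 1 → A.V) :
    Fml.Sat A (nuF n) w ↔ w 0 ∈ A.color (idxK n) := Iff.rfl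

def theInterp (n : ℕ) : Interp (cN n) where
  ν := nuF n
  η := etaF n
  symm := by
    intro A u v h
    rw [sat_eta] at h ⊢
    simp only [Matrix.cons_val_zero, Matrix.cons_val_one, Matrix.head_cons] at h ⊢
    exact ⟨h.2.1, h.1, h.2.2.1.symm, h.2.2.2.symm⟩
  irrefl := by
    intro A v h
    rw [sat_eta] at h
    simp only [Matrix.cons_val_zero, Matrix.cons_val_one, Matrix.head_cons] at h
    exact A.G.loopless.irrefl v h.2.2.1

lemma adj_dist_le_one {V : Type} {G : SimpleGraph V} {u v : V} (h : G.Adj u v) :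
    G.dist u v ≤ 1 := by
  have := SimpleGraph.dist_le h.toWalk
  simpa using this

lemma mem_ball_of_adj {V : Type} {G : SimpleGraph V} {S : Set V} {u z : V}
    (hu : u ∈ S) (h : G.Adj u z) : z ∈ ballSet G 1 S :=
  ⟨u, hu, h.reachable, adj_dist_le_one h⟩

lemma induce_adj_iff {V : Type} (G : SimpleGraph V) (S : Set V) (a b : ↥S) :
    (G.induce S).Adj a b ↔ G.Adj a.val b.val := Iff.rfl

lemma half_induce {n : ℕ} (A : CGraph (cN n)) (v : Fin 2 → A.V) (p q : Fin 2) :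
    HalfP A (v p) (v q) ↔
      HalfP (A.induce (ballSet A.G 1 (Set.range v)))
        ⟨v p, mem_ballSet_self A.G 1 (Set.mem_range_self p)⟩
        ⟨v q, mem_ballSet_self A.G 1 (Set.mem_range_self q)⟩ := by
  constructor
  · rintro ⟨i, hx, hy, hz⟩
    refine ⟨i, hx, hy, ?_⟩
    rintro ⟨z, hzB⟩ hadj hcol
    exact Subtype.ext (hz z hadj hcol)
  · rintro ⟨i, hx, hy, hz⟩
    refine ⟨i, hx, hy, ?_⟩
    intro z hadj hcol
    have hzB : z ∈ ballSet A.G 1 (Set.range v) :=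
      mem_ball_of_adj (Set.mem_range_self q) hadj
    exact congrArg Subtype.val (hz ⟨z, hzB⟩ hadj hcol)

lemma nu_sloc (n : ℕ) : IsStronglyLocalFml 1 (nuF n) := by
  constructor
  · intro A v
    rw [sat_nu]
    exact Iff.rfl
  · intro A v _ i j
    have : i = j := Subsingleton.elim i j
    subst this
    exact ⟨Reachable.refl _, by rw [SimpleGraph.dist_self]; omega⟩

lemma eta_sloc (n : ℕ) : IsStronglyLocalFml 1 (etaF n) := by
  constructor
  · intro A v
    rw [sat_eta]
    refine Iff.trans ?_ (sat_eta _ _).symm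
    have hK : ∀ p : Fin 2, (v p ∈ A.color (idxK n) ↔
        (⟨v p, mem_ballSet_self A.G 1 (Set.mem_range_self p)⟩ :
          (A.induce (ballSet A.G 1 (Set.range v))).V) ∈
          (A.induce (ballSet A.G 1 (Set.range v))).color (idxK n)) := fun p => Iff.rfl
    have hA : (A.G.Adj (v 0) (v 1) ↔
        (A.induce (ballSet A.G 1 (Set.range v))).G.Adj
          ⟨v 0, mem_ballSet_self A.G 1 (Set.mem_range_self 0)⟩
          ⟨v 1, mem_ballSet_self A.G 1 (Set.mem_range_self 1)⟩) := Iff.rfl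
    exact and_congr (hK 0) (and_congr (hK 1) (and_congr hA
      (or_congr (half_induce A v 0 1) (half_induce A v 1 0))))
  · intro A v hs i j
    rw [sat_eta] at hs
    have hadj := hs.2.2.1
    fin_cases i <;> fin_cases j
    · exact ⟨Reachable.refl _, by rw [SimpleGraph.dist_self]; omega⟩
    · exact ⟨hadj.reachable, adj_dist_le_one hadj⟩
    · exact ⟨hadj.symm.reachable, adj_dist_le_one hadj.symm⟩
    · exact ⟨Reachable.refl _, by rw [SimpleGraph.dist_self]; omega⟩

def theColor {V : Type} {n : ℕ} (g : V → Fin n) (P : Fin n → Set V) (K : Set V) :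
    Fin (cN n) → Set V := fun k =>
  if h1 : k.val < n then P ⟨k.val, h1⟩
  else if h2 : k.val < n + n then {w | g w = ⟨k.val - n, by omega⟩}
  else K

lemma theColor_idxP {V : Type} {n : ℕ} (g : V → Fin n) (P : Fin n → Set V) (K : Set V)
    (i : Fin n) : theColor g P K (idxP i) = P i := by
  have hv : (idxP i).val = i.val := rfl
  unfold theColor
  rw [dif_pos (by rw [hv]; exact i.isLt)]
  exact congrArg P (Fin.ext hv)

lemma theColor_idxC {V : Type} {n : ℕ} (g : V → Fin n) (P : Fin n → Set V) (K : Set V)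
    (i : Fin n) : theColor g P K (idxC i) = {w | g w = i} := by
  have hv : (idxC i).val = n + i.val := rfl
  unfold theColor
  rw [dif_neg (by rw [hv]; omega), dif_pos (by rw [hv]; have := i.isLt; omega)]
  have : (⟨(idxC i).val - n, by rw [hv]; have := i.isLt; omega⟩ : Fin n) = i := by
    apply Fin.ext
    show (idxC i).val - n = i.val
    rw [hv]; omega
  rw [this]

lemma theColor_idxK {V : Type} {n : ℕ} (g : V → Fin n) (P : Fin n → Set V) (K : Set V) :
    theColor g P K (idxK n) = K := by
  have hv : (idxK n).val = n + n := rfl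
  unfold theColor
  rw [dif_neg (by rw [hv]; omega), dif_neg (by rw [hv]; omega)]

lemma copyGraph_one_adj {V : Type} (G : SimpleGraph V) (a b : V × Fin 1) :
    (copyGraph G 1).Adj a b ↔ G.Adj a.1 b.1 := by
  constructor
  · rintro (⟨h1, h2⟩ | ⟨h, _⟩)
    · exact absurd (Subsingleton.elim a.2 b.2) h2
    · exact h
  · intro h
    exact Or.inr ⟨h, Subsingleton.elim _ _⟩

lemma star_dichotomy {V : Type} {G : SimpleGraph V} {n : ℕ} {g : V → Fin n}
    (hg : IsStarColoring G n g) {a b : V} (hab : G.Adj a b) :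
    (∀ z, G.Adj b z → g z = g a → z = a) ∨ (∀ z, G.Adj a z → g z = g b → z = b) := by
  by_contra hc
  push_neg at hc
  obtain ⟨⟨z1, h1, h2, h3⟩, ⟨z2, h4, h5, h6⟩⟩ := hc
  have hij : g a ≠ g b := hg.1 a b hab
  have hz12 : z2 ≠ z1 := by
    intro he
    exact hij (by rw [← h2, ← he, h5])
  exact hg.2 z2 a b z1 h4.symm hab h1 h6 (Ne.symm h3) hz12 ⟨h5, h2.symm⟩

def PstD {V : Type} {n : ℕ} (g : V → Fin n) (H : FGraph) (f : H.V → V) : Fin n → Set V :=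
  fun i => {b | ∃ u v : H.V, H.G.Adj u v ∧ b = f v ∧ g (f u) = i}

lemma main_iso {n : ℕ} (G : FGraph) (g : G.V → Fin n) (hgs : IsStarColoring G.G n g)
    (H : FGraph) (f : H.V → G.V) (hfinj : Function.Injective f)
    (hfhom : ∀ u v, H.G.Adj u v → G.G.Adj (f u) (f v)) :
    Transduction.mem ⟨1, Nat.one_pos, cN n, theInterp n⟩ G H := by
  classical
  refine ⟨fun k => {p | p.1 ∈ theColor g (PstD g H f) (Set.range f) k}, ⟨?_⟩⟩
  set A : CGraph (cN n) :=
    Transduction.copyCGraph ⟨1, Nat.one_pos, cN n, theInterp n⟩ G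
      (fun k => {p | p.1 ∈ theColor g (PstD g H f) (Set.range f) k}) with hA
  have hAdj : ∀ p q : A.V, A.G.Adj p q ↔ G.G.Adj p.1 q.1 := fun p q =>
    copyGraph_one_adj G.G p q
  have hcolC : ∀ (i : Fin n) (p : A.V), p ∈ A.color (idxC i) ↔ g p.1 = i := by
    intro i p
    show p.1 ∈ theColor g (PstD g H f) (Set.range f) (idxC i) ↔ _
    rw [theColor_idxC]
    exact Iff.rfl
  have hcolP : ∀ (i : Fin n) (p : A.V), p ∈ A.color (idxP i) ↔ p.1 ∈ PstD g H f i := by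
    intro i p
    show p.1 ∈ theColor g (PstD g H f) (Set.range f) (idxP i) ↔ _
    rw [theColor_idxP]
  have hcolK : ∀ p : A.V, p ∈ A.color (idxK n) ↔ p.1 ∈ Set.range f := by
    intro p
    show p.1 ∈ theColor g (PstD g H f) (Set.range f) (idxK n) ↔ _
    rw [theColor_idxK]
  have hnu : ∀ p : A.V, Fml.Sat A (theInterp n).ν ![p] ↔ p.1 ∈ Set.range f := by
    intro p
    rw [show (theInterp n).ν = nuF n from rfl, sat_nu]
    simp only [Matrix.cons_val_zero]
    exact hcolK p
  have main : ∀ u v : H.V,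
      EProp A ((f u, 0) : G.V × Fin 1) ((f v, 0) : G.V × Fin 1) ↔ H.G.Adj u v := by
    intro u v
    constructor
    · rintro ⟨-, -, hadj, hhalf | hhalf⟩
      · obtain ⟨i, hxi, hyP, hz⟩ := hhalf
        replace hxi := (hcolC _ _).mp hxi
        replace hyP := (hcolP _ _).mp hyP
        obtain ⟨u0, v0, huv0, hb, hgi⟩ := hyP
        have hv0 : v = v0 := hfinj hb
        subst hv0
        have hzu : ((f u0, 0) : G.V × Fin 1) = (f u, 0) := by
          apply hz
          · refine (hAdj _ _).mpr ?_
            exact (hfhom _ _ huv0).symm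
          · refine (hcolC _ _).mpr ?_
            exact hgi
        have hu0 : u0 = u := hfinj (congrArg Prod.fst hzu)
        subst hu0
        exact huv0
      · obtain ⟨i, hxi, hyP, hz⟩ := hhalf
        replace hxi := (hcolC _ _).mp hxi
        replace hyP := (hcolP _ _).mp hyP
        obtain ⟨u0, v0, huv0, hb, hgi⟩ := hyP
        have hv0 : u = v0 := hfinj hb
        subst hv0
        have hzu : ((f u0, 0) : G.V × Fin 1) = (f v, 0) := by
          apply hz
          · refine (hAdj _ _).mpr ?_
            exact (hfhom _ _ huv0).symm
          · refine (hcolC _ _).mpr ?_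
            exact hgi
        have hu0 : u0 = v := hfinj (congrArg Prod.fst hzu)
        subst hu0
        exact huv0.symm
    · intro huv
      have hadjG : G.G.Adj (f u) (f v) := hfhom u v huv
      refine ⟨(hcolK _).mpr ⟨u, rfl⟩, (hcolK _).mpr ⟨v, rfl⟩, (hAdj _ _).mpr hadjG, ?_⟩
      rcases star_dichotomy hgs hadjG with hc | hc
      · left
        refine ⟨g (f u), (hcolC _ _).mpr rfl, (hcolP _ _).mpr ⟨u, v, huv, rfl, rfl⟩, ?_⟩
        intro z hazd hcz
        replace hazd := (hAdj _ _).mp hazd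
        replace hcz := (hcolC _ _).mp hcz
        exact Prod.ext (hc z.1 hazd hcz) (Subsingleton.elim _ _)
      · right
        refine ⟨g (f v), (hcolC _ _).mpr rfl, (hcolP _ _).mpr ⟨v, u, huv.symm, rfl, rfl⟩, ?_⟩
        intro z hazd hcz
        replace hazd := (hAdj _ _).mp hazd
        replace hcz := (hcolC _ _).mp hcz
        exact Prod.ext (hc z.1 hazd hcz) (Subsingleton.elim _ _)
  have hbij : Function.Bijective
      (fun w : H.V => (⟨(f w, 0), (hnu _).mpr ⟨w, rfl⟩⟩ :
        {p : A.V // Fml.Sat A (theInterp n).ν ![p]})) := by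
    constructor
    · intro a b hab
      exact hfinj (congrArg Prod.fst (congrArg Subtype.val hab))
    · rintro ⟨⟨a, t⟩, hp⟩
      obtain ⟨w, hw⟩ := (hnu _).mp hp
      exact ⟨w, Subtype.ext (Prod.ext hw (Subsingleton.elim _ _))⟩
  refine ⟨Equiv.ofBijective _ hbij, ?_⟩
  intro u v
  show Fml.Sat A (theInterp n).η ![(f u, 0), (f v, 0)] ↔ H.G.Adj u v
  rw [show (theInterp n).η = etaF n from rfl, sat_eta]
  simp only [Matrix.cons_val_zero, Matrix.cons_val_one, Matrix.head_cons]
  exact main u v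

end StarTrans

/-! ### The statement -/

theorem monotone_closure_immersive_transduction (C : Set FGraph) (h : BddStarChrom C) :
    ∃ T : Transduction, T.Immersive ∧ monotoneClosure C ⊆ TImage T C := by
  obtain ⟨n, hn⟩ := h
  refine ⟨⟨1, Nat.one_pos, StarTrans.cN n, StarTrans.theInterp n⟩,
    ⟨rfl, 1, StarTrans.nu_sloc n, StarTrans.eta_sloc n⟩, ?_⟩
  rintro H ⟨G, hG, f, hfinj, hfhom⟩
  obtain ⟨g, hgs⟩ := hn G hG
  exact ⟨G, hG, StarTrans.main_iso G g hgs H f hfinj hfhom⟩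
end

section
/- Let 𝒞 and 𝒟 be classes of graphs, and let T = I ∘ Γ_𝒰 ∘ C_k be a transduction with 𝒞 ⊆ T(𝒟). Assume that for every G ∈ 𝒞 there exists a graph H ∈ 𝒟 such that G ∈ T(H) and the vertex set of G (as a subset of the vertex set of C_k(H)) does not contain two clones of any vertex of H. Then 𝒞 ⊑°_FO 𝒟. -/
open SimpleGraph

/-! ### The statement -/

namespace ElimAux

/-- An always-false formula. -/
def falseFml {c m : ℕ} : Fml c m := .ex (.not (.eq (Fin.last m) (Fin.last m)))

lemma falseFml_sat {c m : ℕ} (A : CGraph c) (v : Fin m → A.V) :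
    ¬ Fml.Sat A falseFml v := by
  rintro ⟨w, hw⟩
  exact hw rfl

/-- Conjunction. -/
def fand {c m : ℕ} (φ ψ : Fml c m) : Fml c m := .not (.or (.not φ) (.not ψ))

lemma fand_sat {c m : ℕ} (A : CGraph c) (φ ψ : Fml c m) (v : Fin m → A.V) :
    Fml.Sat A (fand φ ψ) v ↔ Fml.Sat A φ v ∧ Fml.Sat A ψ v := by
  simp [fand, Fml.Sat]

/-- Finite disjunction. -/
def bigOr {c m : ℕ} : List (Fml c m) → Fml c m
  | [] => falseFml
  | φ :: l => .or φ (bigOr l)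

lemma bigOr_sat {c m : ℕ} (A : CGraph c) (l : List (Fml c m)) (v : Fin m → A.V) :
    Fml.Sat A (bigOr l) v ↔ ∃ φ ∈ l, Fml.Sat A φ v := by
  induction l with
  | nil =>
      simp only [bigOr, List.not_mem_nil, false_and, exists_false, iff_false]
      exact falseFml_sat A v
  | cons φ l ih =>
      simp only [bigOr, Fml.Sat, ih, List.mem_cons]
      constructor
      · rintro (h | ⟨ψ, hψ, h⟩)
        · exact ⟨φ, Or.inl rfl, h⟩
        · exact ⟨ψ, Or.inr hψ, h⟩
      · rintro ⟨ψ, (rfl | hψ), h⟩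
        · exact Or.inl h
        · exact Or.inr ⟨ψ, hψ, h⟩

/-- Variable renaming. -/
def rename {c : ℕ} : {m n : ℕ} → (Fin m → Fin n) → Fml c m → Fml c n
  | _, _, σ, .eq i j => .eq (σ i) (σ j)
  | _, _, σ, .adj i j => .adj (σ i) (σ j)
  | _, _, σ, .col i x => .col i (σ x)
  | _, _, σ, .not φ => .not (rename σ φ)
  | _, _, σ, .or φ ψ => .or (rename σ φ) (rename σ ψ)
  | _, _, σ, .ex φ => .ex (rename (Fin.snoc (Fin.castSucc ∘ σ) (Fin.last _)) φ)

lemma rename_sat {c : ℕ} (A : CGraph c) :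
    ∀ {m n : ℕ} (φ : Fml c m) (σ : Fin m → Fin n) (v : Fin n → A.V),
      Fml.Sat A (rename σ φ) v ↔ Fml.Sat A φ (v ∘ σ) := by
  intro m n φ
  induction φ generalizing n with
  | eq i j => intro σ v; rfl
  | adj i j => intro σ v; rfl
  | col i x => intro σ v; rfl
  | not φ ih => intro σ v; simp [rename, Fml.Sat, ih]
  | or φ ψ ih1 ih2 => intro σ v; simp [rename, Fml.Sat, ih1, ih2]
  | ex φ ih =>
      intro σ v
      simp only [rename, Fml.Sat, ih]
      constructor <;> rintro ⟨w, hw⟩ <;> refine ⟨w, ?_⟩ <;>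
        [ (convert hw using 2; funext a; refine Fin.lastCases ?_ ?_ a <;> simp);
          (convert hw using 2; funext a; refine Fin.lastCases ?_ ?_ a <;> simp) ]

/-- Color index for an original color `j` and clone index `i`. -/
def colOrig {c k : ℕ} (j : Fin c) (i : Fin k) : Fin (c * k + k) :=
  ⟨j.1 * k + i.1, by
    have h1 : j.1 + 1 ≤ c := j.2
    have h2 : (j.1 + 1) * k ≤ c * k := Nat.mul_le_mul_right k h1
    have h3 : j.1 * k + i.1 < (j.1 + 1) * k := by
      rw [Nat.succ_mul]; exact Nat.add_lt_add_left i.2 _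
    omega⟩

/-- Color index marking the chosen clone index `i`. -/
def colChosen {c k : ℕ} (i : Fin k) : Fin (c * k + k) :=
  ⟨c * k + i.1, Nat.add_lt_add_left i.2 _⟩

lemma colOrig_inj {c k : ℕ} {j j' : Fin c} {i i' : Fin k}
    (h : colOrig (k := k) j i = colOrig j' i') : j = j' ∧ i = i' := by
  have hv : j.1 * k + i.1 = j'.1 * k + i'.1 := congrArg Fin.val h
  have hi : i.1 = i'.1 := by
    have h1 : (j.1 * k + i.1) % k = i.1 := by
      rw [Nat.mul_add_mod']
      exact Nat.mod_eq_of_lt i.2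
    have h2 : (j'.1 * k + i'.1) % k = i'.1 := by
      rw [Nat.mul_add_mod']
      exact Nat.mod_eq_of_lt i'.2
    rw [← h1, hv, h2]
  have hk : 0 < k := i.pos
  have hj : j.1 = j'.1 := by
    have : j.1 * k = j'.1 * k := by omega
    exact Nat.eq_of_mul_eq_mul_right hk this
  exact ⟨Fin.ext hj, Fin.ext hi⟩

lemma colOrig_ne_colChosen {c k : ℕ} (j : Fin c) (i i' : Fin k) :
    colOrig j i ≠ colChosen (c := c) i' := by
  intro h
  have hv : j.1 * k + i.1 = c * k + i'.1 := congrArg Fin.val h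
  have h1 : j.1 + 1 ≤ c := j.2
  have h2 : (j.1 + 1) * k ≤ c * k := Nat.mul_le_mul_right k h1
  have h3 : j.1 * k + i.1 < (j.1 + 1) * k := by
    rw [Nat.succ_mul]; exact Nat.add_lt_add_left i.2 _
  omega

lemma colChosen_inj {c k : ℕ} {i i' : Fin k}
    (h : colChosen (c := c) i = colChosen i') : i = i' := by
  have hv : c * k + i.1 = c * k + i'.1 := congrArg Fin.val h
  exact Fin.ext (by omega)

/-- Translating a formula over the `k`-copy graph, given clone indices for the
free variables. -/
def transFml {c k : ℕ} : {m : ℕ} → (Fin m → Fin k) → Fml c m → Fml (c * k + k) m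
  | _, ι, .eq a b => if ι a = ι b then .eq a b else falseFml
  | _, ι, .adj a b => if ι a = ι b then .adj a b else .eq a b
  | _, ι, .col j x => .col (colOrig j (ι x)) x
  | _, ι, .not φ => .not (transFml ι φ)
  | _, ι, .or φ ψ => .or (transFml ι φ) (transFml ι ψ)
  | _, ι, .ex φ => bigOr (List.ofFn fun i : Fin k => .ex (transFml (Fin.snoc ι i) φ))

lemma transFml_sat {c k : ℕ} {W : Type} [Finite W] (G : SimpleGraph W)
    (color : Fin c → Set (W × Fin k))
    (B : CGraph (c * k + k)) (ψ : B.V → W)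
    (hinj : Function.Injective ψ) (hsurj : Function.Surjective ψ)
    (hadj : ∀ x y, B.G.Adj x y ↔ G.Adj (ψ x) (ψ y))
    (hcol : ∀ (j : Fin c) (i : Fin k) (x : B.V),
      x ∈ B.color (colOrig j i) ↔ (ψ x, i) ∈ color j) :
    ∀ {m : ℕ} (φ : Fml c m) (ι : Fin m → Fin k) (w : Fin m → B.V),
      Fml.Sat { V := W × Fin k, G := copyGraph G k, color := color } φ
          (fun a => (ψ (w a), ι a)) ↔
        Fml.Sat B (transFml ι φ) w := by
  intro m φ
  induction φ with
  | eq a b =>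
      intro ι w
      simp only [transFml]
      split_ifs with hι
      · show ((ψ (w a), ι a) = (ψ (w b), ι b)) ↔ w a = w b
        rw [Prod.mk.injEq]
        constructor
        · rintro ⟨h1, _⟩; exact hinj h1
        · intro h; exact ⟨congrArg ψ h, hι⟩
      · constructor
        · rintro h
          exact absurd (congrArg Prod.snd h) hι
        · intro h; exact absurd h (falseFml_sat B w)
  | adj a b =>
      intro ι w
      simp only [transFml]
      split_ifs with hι
      · show ((ψ (w a) = ψ (w b) ∧ ι a ≠ ι b) ∨
            (G.Adj (ψ (w a)) (ψ (w b)) ∧ ι a = ι b)) ↔ B.G.Adj (w a) (w b)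
        rw [hadj]
        constructor
        · rintro (⟨_, hne⟩ | ⟨hGa, _⟩)
          · exact absurd hι hne
          · exact hGa
        · intro hGa; exact Or.inr ⟨hGa, hι⟩
      · show ((ψ (w a) = ψ (w b) ∧ ι a ≠ ι b) ∨
            (G.Adj (ψ (w a)) (ψ (w b)) ∧ ι a = ι b)) ↔ w a = w b
        constructor
        · rintro (⟨h1, _⟩ | ⟨_, heq⟩)
          · exact hinj h1
          · exact absurd heq hι
        · intro h; exact Or.inl ⟨congrArg ψ h, hι⟩
  | col j x =>
      intro ι w
      show (ψ (w x), ι x) ∈ color j ↔ w x ∈ B.color (colOrig j (ι x))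
      exact (hcol j (ι x) (w x)).symm
  | not φ ih =>
      intro ι w
      show ¬ _ ↔ ¬ _
      rw [ih ι w]
  | or φ χ ih1 ih2 =>
      intro ι w
      show _ ∨ _ ↔ _ ∨ _
      rw [ih1 ι w, ih2 ι w]
  | ex φ ih =>
      intro ι w
      rw [show transFml ι (.ex φ) =
        bigOr (List.ofFn fun i : Fin k => .ex (transFml (Fin.snoc ι i) φ)) from rfl]
      rw [bigOr_sat]
      have key : ∀ (u : B.V) (i : Fin k),
          (Fin.snoc (fun a => (ψ (w a), ι a)) (ψ u, i) : Fin _ → W × Fin k) =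
            fun a => (ψ (@Fin.snoc _ (fun _ => B.V) w u a), @Fin.snoc _ (fun _ => Fin k) ι i a) := by
        intro u i
        funext a
        refine Fin.lastCases ?_ ?_ a <;> simp
      constructor
      · rintro ⟨⟨x1, i⟩, hx⟩
        obtain ⟨u, rfl⟩ := hsurj x1
        refine ⟨.ex (transFml (Fin.snoc ι i) φ), List.mem_ofFn.2 ⟨i, rfl⟩, u, ?_⟩
        rw [← ih (Fin.snoc ι i) (Fin.snoc w u)]
        rw [key u i] at hx
        exact hx
      · rintro ⟨χ, hχ, hsat⟩
        obtain ⟨i, rfl⟩ := List.mem_ofFn.1 hχ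
        obtain ⟨u, hu⟩ := hsat
        have hu' := (ih (Fin.snoc ι i) (Fin.snoc w u)).2 hu
        rw [← key u i] at hu'
        exact ⟨(ψ u, i), hu'⟩

end ElimAux
namespace ElimAux

lemma sat_col {c m : ℕ} (A : CGraph c) (n : Fin c) (x : Fin m) (v : Fin m → A.V) :
    Fml.Sat A (.col n x) v ↔ v x ∈ A.color n := Iff.rfl

/-- The new `ν` formula. -/
def transNu {c k : ℕ} (ν : Fml c 1) : Fml (c * k + k) 1 :=
  bigOr (List.ofFn fun i : Fin k =>
    fand (.col (colChosen i) 0) (transFml ![i] ν))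

lemma transNu_sat {c k : ℕ} (ν : Fml c 1) (A : CGraph (c * k + k)) (u : A.V) :
    Fml.Sat A (transNu ν) ![u] ↔
      ∃ i : Fin k, u ∈ A.color (colChosen i) ∧ Fml.Sat A (transFml ![i] ν) ![u] := by
  rw [transNu, bigOr_sat]
  constructor
  · rintro ⟨φ, hφ, h1⟩
    obtain ⟨i, rfl⟩ := List.mem_ofFn.1 hφ
    rw [fand_sat] at h1
    obtain ⟨h1, h2⟩ := h1
    rw [sat_col] at h1
    simp only [Matrix.cons_val_zero] at h1
    exact ⟨i, h1, h2⟩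
  · rintro ⟨i, h1, h2⟩
    refine ⟨_, List.mem_ofFn.2 ⟨i, rfl⟩, ?_⟩
    rw [fand_sat, sat_col]
    simp only [Matrix.cons_val_zero]
    exact ⟨h1, h2⟩

/-- The new raw `η` formula. -/
def transEtaRaw {c k : ℕ} (η : Fml c 2) : Fml (c * k + k) 2 :=
  bigOr (List.ofFn fun i : Fin k =>
    bigOr (List.ofFn fun j : Fin k =>
      fand (.col (colChosen i) 0)
        (fand (.col (colChosen j) 1) (transFml ![i, j] η))))

lemma transEtaRaw_sat {c k : ℕ} (η : Fml c 2) (A : CGraph (c * k + k)) (u v : A.V) :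
    Fml.Sat A (transEtaRaw η) ![u, v] ↔
      ∃ i j : Fin k, u ∈ A.color (colChosen i) ∧ v ∈ A.color (colChosen j) ∧
        Fml.Sat A (transFml ![i, j] η) ![u, v] := by
  rw [transEtaRaw, bigOr_sat]
  constructor
  · rintro ⟨φ, hφ, h1⟩
    obtain ⟨i, rfl⟩ := List.mem_ofFn.1 hφ
    rw [bigOr_sat] at h1
    obtain ⟨ψ, hψ, h2⟩ := h1
    obtain ⟨j, rfl⟩ := List.mem_ofFn.1 hψ
    rw [fand_sat, fand_sat, sat_col, sat_col] at h2
    simp only [Matrix.cons_val_zero, Matrix.cons_val_one, Matrix.head_cons] at h2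
    exact ⟨i, j, h2.1, h2.2.1, h2.2.2⟩
  · rintro ⟨i, j, h1, h2, h3⟩
    refine ⟨_, List.mem_ofFn.2 ⟨i, rfl⟩, ?_⟩
    rw [bigOr_sat]
    refine ⟨_, List.mem_ofFn.2 ⟨j, rfl⟩, ?_⟩
    rw [fand_sat, fand_sat, sat_col, sat_col]
    simp only [Matrix.cons_val_zero, Matrix.cons_val_one, Matrix.head_cons]
    exact ⟨h1, h2, h3⟩

/-- The new `η` formula: symmetrized and made irreflexive. -/
def transEta {c k : ℕ} (η : Fml c 2) : Fml (c * k + k) 2 :=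
  fand (.not (.eq 0 1)) (.or (transEtaRaw η) (rename ![1, 0] (transEtaRaw η)))

lemma transEta_sat {c k : ℕ} (η : Fml c 2) (A : CGraph (c * k + k)) (u v : A.V) :
    Fml.Sat A (transEta η) ![u, v] ↔
      u ≠ v ∧ (Fml.Sat A (transEtaRaw η) ![u, v] ∨ Fml.Sat A (transEtaRaw η) ![v, u]) := by
  rw [transEta, fand_sat]
  have hswap : (![u, v] ∘ (![1, 0] : Fin 2 → Fin 2)) = ![v, u] := by
    funext a; fin_cases a <;> rfl
  have hne : Fml.Sat A (.not (.eq 0 1)) ![u, v] ↔ u ≠ v := by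
    show ¬ (![u, v] 0 = ![u, v] 1) ↔ _
    simp
  have hor : Fml.Sat A (.or (transEtaRaw η) (rename ![1, 0] (transEtaRaw η))) ![u, v] ↔
      Fml.Sat A (transEtaRaw η) ![u, v] ∨ Fml.Sat A (transEtaRaw η) ![v, u] := by
    show _ ∨ _ ↔ _ ∨ _
    rw [rename_sat, hswap]
  rw [hne, hor]

/-- The new interpretation. -/
def transInterp {c k : ℕ} (I : Interp c) : Interp (c * k + k) where
  ν := transNu (k := k) I.ν
  η := transEta I.η
  symm := by
    intro A u v hs
    rw [transEta_sat] at hs ⊢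
    exact ⟨hs.1.symm, hs.2.symm⟩
  irrefl := by
    intro A v hs
    exact ((transEta_sat _ _ _ _).1 hs).1 rfl

/-- The non-copying transduction replacing `T`. -/
def transT (T : Transduction) : Transduction where
  k := 1
  kpos := Nat.one_pos
  c := T.c * T.k + T.k
  I := transInterp T.I

lemma transT_mem (T : Transduction) (G H : FGraph) (color : Fin T.c → Set (H.V × Fin T.k))
    (e : G.G ≃g T.I.result (T.copyCGraph H color))
    (hinj : Function.Injective fun v : G.V => ((e v).1).1) :
    (transT T).mem H G := by
  classical
  -- the chosen-clone sets
  let chosen : Fin T.k → Set H.V :=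
    fun i => {u | ∃ g : G.V, ((e g).1 : H.V × Fin T.k) = (u, i)}
  -- the new coloring
  let color' : Fin (T.c * T.k + T.k) → Set (H.V × Fin 1) := fun n =>
    {x | (∃ j i, n = colOrig j i ∧ (x.1, i) ∈ color j) ∨
         (∃ i, n = colChosen i ∧ x.1 ∈ chosen i)}
  let B : CGraph (T.c * T.k + T.k) := (transT T).copyCGraph H color'
  have hψinj : Function.Injective (Prod.fst : H.V × Fin 1 → H.V) :=
    fun x y hxy => Prod.ext hxy (Subsingleton.elim _ _)
  have hψsurj : Function.Surjective (Prod.fst : H.V × Fin 1 → H.V) :=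
    fun u => ⟨(u, 0), rfl⟩
  have hadj : ∀ x y : H.V × Fin 1, (copyGraph H.G 1).Adj x y ↔ H.G.Adj x.1 y.1 := by
    intro x y
    constructor
    · rintro (⟨_, hne⟩ | ⟨ha, _⟩)
      · exact absurd (Subsingleton.elim _ _) hne
      · exact ha
    · intro ha; exact Or.inr ⟨ha, Subsingleton.elim _ _⟩
  have hcol : ∀ (j : Fin T.c) (i : Fin T.k) (x : H.V × Fin 1),
      x ∈ color' (colOrig j i) ↔ (x.1, i) ∈ color j := by
    intro j i x
    constructor
    · rintro (⟨j', i', heq, hm⟩ | ⟨i', heq, _⟩)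
      · obtain ⟨rfl, rfl⟩ := colOrig_inj heq
        exact hm
      · exact absurd heq (colOrig_ne_colChosen j i i').elim
    · intro hm; exact Or.inl ⟨j, i, rfl, hm⟩
  have hcolC : ∀ (i : Fin T.k) (x : H.V × Fin 1),
      x ∈ color' (colChosen i) ↔ x.1 ∈ chosen i := by
    intro i x
    constructor
    · rintro (⟨j', i', heq, _⟩ | ⟨i', heq, hm⟩)
      · exact absurd heq.symm (colOrig_ne_colChosen j' i' i)
      · obtain rfl := colChosen_inj heq
        exact hm
    · intro hm; exact Or.inr ⟨i, rfl, hm⟩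
  have hts : ∀ {m : ℕ} (φ : Fml T.c m) (ι : Fin m → Fin T.k) (w : Fin m → B.V),
      Fml.Sat (T.copyCGraph H color) φ (fun a => (Prod.fst (w a), ι a)) ↔
        Fml.Sat B (transFml ι φ) w :=
    fun φ ι w => transFml_sat H.G color B Prod.fst hψinj hψsurj hadj hcol φ ι w
  -- basic facts about the chosen sets
  have hchosen_self : ∀ g : G.V, (e g).1.1 ∈ chosen (e g).1.2 := fun g => ⟨g, rfl⟩
  have hchosen_unique : ∀ (g : G.V) (i : Fin T.k), (e g).1.1 ∈ chosen i → i = (e g).1.2 := by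
    rintro g i ⟨g', hg'⟩
    have h1 := congrArg Prod.fst hg'
    have h2 : g' = g := hinj h1
    subst h2
    have h3 := congrArg Prod.snd hg'
    exact h3.symm
  -- the embedding of vertices
  let F : G.V → B.V := fun g => ((e g).1.1, (0 : Fin 1))
  -- assignment computations
  have fun1 : ∀ g : G.V,
      (fun a : Fin 1 => (Prod.fst ((![F g] : Fin 1 → B.V) a),
        (![(e g).1.2] : Fin 1 → Fin T.k) a)) = ![(e g).1] := by
    intro g
    funext a
    fin_cases a
    simp [F] <;> rfl
  have fun2 : ∀ g g' : G.V,
      (fun a : Fin 2 => (Prod.fst ((![F g, F g'] : Fin 2 → B.V) a),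
        (![(e g).1.2, (e g').1.2] : Fin 2 → Fin T.k) a)) = ![(e g).1, (e g').1] := by
    intro g g'
    funext a
    fin_cases a <;> simp [F] <;> rfl
  -- ν is satisfied exactly at the images of F
  have hν : ∀ g : G.V, Fml.Sat B (transNu (k := T.k) T.I.ν) ![F g] := by
    intro g
    rw [transNu_sat]
    refine ⟨(e g).1.2, (hcolC _ _).2 (hchosen_self g), ?_⟩
    refine (hts T.I.ν ![(e g).1.2] ![F g]).1 ?_
    rw [fun1 g]
    exact (e g).2
  have hν' : ∀ x : B.V, Fml.Sat B (transNu (k := T.k) T.I.ν) ![x] → ∃ g, F g = x := by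
    intro x hx
    rw [transNu_sat] at hx
    obtain ⟨i, hcm, -⟩ := hx
    obtain ⟨g, hg⟩ := (hcolC i x).1 hcm
    refine ⟨g, ?_⟩
    have h1 := congrArg Prod.fst hg
    show (((e g).1.1, (0 : Fin 1)) : H.V × Fin 1) = x
    exact Prod.ext h1 (Subsingleton.elim _ _)
  -- the raw η formula captures the original adjacency
  have hraw : ∀ g g' : G.V,
      Fml.Sat B (transEtaRaw T.I.η) ![F g, F g'] ↔
        Fml.Sat (T.copyCGraph H color) T.I.η ![(e g).1, (e g').1] := by
    intro g g'
    rw [transEtaRaw_sat]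
    constructor
    · rintro ⟨i, j, hi, hj, hsat⟩
      obtain rfl := hchosen_unique g i ((hcolC _ _).1 hi)
      obtain rfl := hchosen_unique g' j ((hcolC _ _).1 hj)
      have := (hts T.I.η ![(e g).1.2, (e g').1.2] ![F g, F g']).2 hsat
      rwa [fun2 g g'] at this
    · intro hsat
      refine ⟨(e g).1.2, (e g').1.2, (hcolC _ _).2 (hchosen_self g),
        (hcolC _ _).2 (hchosen_self g'), ?_⟩
      refine (hts T.I.η ![(e g).1.2, (e g').1.2] ![F g, F g']).1 ?_
      rw [fun2 g g']
      exact hsat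
  have hmap : ∀ a b : G.V,
      Fml.Sat (T.copyCGraph H color) T.I.η ![(e a).1, (e b).1] ↔ G.G.Adj a b :=
    fun a b => e.map_rel_iff
  have hAdjIff : ∀ g g' : G.V, Fml.Sat B (transEta T.I.η) ![F g, F g'] ↔ G.G.Adj g g' := by
    intro g g'
    rw [transEta_sat, hraw g g', hraw g' g]
    constructor
    · rintro ⟨-, (h1 | h2)⟩
      · exact (hmap g g').1 h1
      · exact G.G.adj_symm ((hmap g' g).1 h2)
    · intro ha
      refine ⟨?_, Or.inl ((hmap g g').2 ha)⟩
      intro hFeq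
      have h2 := congrArg Prod.fst hFeq
      exact ha.ne (hinj h2)
  -- the isomorphism
  have hFinj : Function.Injective F := by
    intro a b hab
    have h2 := congrArg Prod.fst hab
    exact hinj h2
  refine ⟨color', ⟨?_⟩⟩
  refine ⟨Equiv.ofBijective (fun g => (⟨F g, hν g⟩ :
      {x : B.V // Fml.Sat B ((transT T).I.ν) ![x]})) ⟨?_, ?_⟩, ?_⟩
  · intro a b hab
    exact hFinj (congrArg Subtype.val hab)
  · rintro ⟨x, hx⟩
    obtain ⟨g, hg⟩ := hν' x hx
    exact ⟨g, Subtype.ext hg⟩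
  · intro a b
    exact hAdjIff a b

end ElimAux

theorem elimination_of_copying (T : Transduction) (C D : Set FGraph)
    (hCT : C ⊆ TImage T D)
    (h : ∀ G ∈ C, ∃ H ∈ D, ∃ color : Fin T.c → Set (H.V × Fin T.k),
      ∃ e : G.G ≃g T.I.result (T.copyCGraph H color),
        Function.Injective fun v : G.V => ((e v).1).1) :
    SqFOnc C D := by
  refine ⟨ElimAux.transT T, rfl, ?_⟩
  intro G hG
  obtain ⟨H, hHD, color, e, hinj⟩ := h G hG
  exact ⟨H, hHD, ElimAux.transT_mem T G H color e hinj⟩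
end
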